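/- Suppose (I, ≼, J, ψ) is allowable with ≲ = 𝒫(I, ≼, J, ψ), and ξ : J → K is a surjective map to a finite set K. Then (J, ≲, K, ξ) is allowable if and only if (I, ≼, K, ξ ∘ ψ) is allowable, and when they are allowable, 𝒫(J, ≲, K, ξ) = 𝒫(I, ≼, K, ξ ∘ ψ). -/

import Mathlib

namespace JoyceIII

/-- `r` dominates `s` (for relations on `K`): `k s l` implies `k r l`. -/
def Dominates {K : Type*} (r s : K → K → Prop) : Prop :=
  ∀ i j, s i j → r i j

/-- `(I, ≼, K, φ)` is allowable: there exists a partial order `⊴` on `K` such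
that `i ≼ j` implies `φ i ⊴ φ j`. -/
def Allowable {I K : Type*} (pr : I → I → Prop) (φ : I → K) : Prop :=
  ∃ tl : K → K → Prop, IsPartialOrder K tl ∧ ∀ i j, pr i j → tl (φ i) (φ j)

/-- The relation `𝒫(I, ≼, K, φ)` on `K`: `k` is related to `l` iff there are
`b ≥ 0` and `i₀, …, i_b`, `j₀, …, j_b` in `I` with `φ i₀ = k`, `φ j_b = l`,
`i_a ≼ j_a` for `0 ≤ a ≤ b`, and `φ (i_a) = φ (j_(a-1))` for `1 ≤ a ≤ b`. -/
def PRel {I K : Type*} (pr : I → I → Prop) (φ : I → K) (k l : K) : Prop :=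
  ∃ (b : ℕ) (i j : ℕ → I),
    φ (i 0) = k ∧ φ (j b) = l ∧
    (∀ a, a ≤ b → pr (i a) (j a)) ∧
    (∀ a, 1 ≤ a → a ≤ b → φ (i a) = φ (j (a - 1)))

/-- One step of the chain relation. -/
def Step {I K : Type*} (pr : I → I → Prop) (φ : I → K) (k l : K) : Prop :=
  ∃ i j, pr i j ∧ φ i = k ∧ φ j = l

lemma pRel_eq_transGen {I K : Type*} (pr : I → I → Prop) (φ : I → K) :
    PRel pr φ = Relation.TransGen (Step pr φ) := by
  ext k l
  constructor
  · rintro ⟨b, i, j, rfl, rfl, hstep, hlink⟩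
    induction b with
    | zero => exact .single ⟨_, _, hstep 0 le_rfl, rfl, rfl⟩
    | succ b ih =>
      have h1 : Relation.TransGen (Step pr φ) (φ (i 0)) (φ (j b)) :=
        ih (fun a ha => hstep a (ha.trans (Nat.le_succ b)))
          (fun a ha1 ha2 => hlink a ha1 (ha2.trans (Nat.le_succ b)))
      refine h1.tail ⟨i (b+1), j (b+1), hstep (b+1) le_rfl, ?_, rfl⟩
      simpa using hlink (b+1) (by omega) le_rfl
  · intro h
    induction h with
    | single h =>
      obtain ⟨i, j, hij, hi, hj⟩ := h
      exact ⟨0, fun _ => i, fun _ => j, hi, hj, fun a _ => hij, by omega⟩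
    | tail h hs ih =>
      obtain ⟨b, i, j, hi, hj, hstep, hlink⟩ := ih
      obtain ⟨i', j', hij', hi', hj'⟩ := hs
      refine ⟨b+1, fun a => if a ≤ b then i a else i',
        fun a => if a ≤ b then j a else j', by simpa using hi, by simp [hj'], ?_, ?_⟩
      · intro a ha
        by_cases h : a ≤ b <;> simp only [h, if_true, if_false]
        · exact hstep a h
        · exact hij'
      · intro a ha1 ha2
        by_cases h : a ≤ b
        · have h' : a - 1 ≤ b := by omega
          simp only [h, h', if_true]
          exact hlink a ha1 h
        · have ha : a = b + 1 := by omega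
          subst ha
          simp only [h, if_false, Nat.add_sub_cancel, le_refl, if_true]
          rw [hi', hj]

/-- **Lemma 6.7.** If `(I, ≼, J, ψ)` is allowable with `≲ = 𝒫(I, ≼, J, ψ)` and
`ξ : J → K` is surjective, then `(J, ≲, K, ξ)` is allowable iff
`(I, ≼, K, ξ ∘ ψ)` is allowable, and in that case
`𝒫(J, ≲, K, ξ) = 𝒫(I, ≼, K, ξ ∘ ψ)`. -/
theorem pRel_transitivity
    {I J K : Type*} [Fintype I] [Fintype J] [Fintype K]
    (pr : I → I → Prop) (hpr : IsPartialOrder I pr)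
    (ψ : I → J) (hψ : Function.Surjective ψ) (h1 : Allowable pr ψ)
    (ξ : J → K) (hξ : Function.Surjective ξ) :
    (Allowable (PRel pr ψ) ξ ↔ Allowable pr (ξ ∘ ψ)) ∧
    (Allowable (PRel pr ψ) ξ → PRel (PRel pr ψ) ξ = PRel pr (ξ ∘ ψ)) := by
  have hsingle : ∀ i j : I, pr i j → PRel pr ψ (ψ i) (ψ j) := fun i j hij =>
    ⟨0, fun _ => i, fun _ => j, rfl, rfl, fun a _ => hij, by omega⟩
  have hlift : ∀ {j1 j2 : J}, PRel pr ψ j1 j2 →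
      Relation.TransGen (Step pr (ξ ∘ ψ)) (ξ j1) (ξ j2) := by
    intro j1 j2 h
    rw [pRel_eq_transGen] at h
    exact h.lift ξ (fun a b ⟨i, j, hij, ha, hb⟩ =>
      ⟨i, j, hij, by simp [ha], by simp [hb]⟩)
  constructor
  · constructor
    · rintro ⟨tl, htl, hdom⟩
      exact ⟨tl, htl, fun i j hij => hdom _ _ (hsingle i j hij)⟩
    · rintro ⟨tl, htl, hdom⟩
      refine ⟨tl, htl, fun j1 j2 h => ?_⟩
      have := hlift h
      have htrans : Transitive tl := fun a b c => htl.toIsPreorder.toIsTrans.trans a b c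
      haveI htI : IsTrans K tl := htl.toIsPreorder.toIsTrans
      rw [← Relation.transGen_eq_self (r := tl)]
      exact Relation.TransGen.mono (r := Step pr (ξ ∘ ψ)) (p := tl) (fun a b ⟨i, j, hij, ha, hb⟩ => ha ▸ hb ▸ hdom i j hij) _ _ this
  · intro _
    rw [pRel_eq_transGen (PRel pr ψ) ξ, pRel_eq_transGen pr (ξ ∘ ψ)]
    ext k l
    constructor
    · intro h
      rw [← Relation.transGen_idem (r := Step pr (ξ ∘ ψ))]
      exact Relation.TransGen.mono (r := Step (PRel pr ψ) ξ) (p := Relation.TransGen (Step pr (ξ ∘ ψ))) (fun a b ⟨j1, j2, hP, ha, hb⟩ => ha ▸ hb ▸ hlift hP) _ _ h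
    · intro h
      exact Relation.TransGen.mono (r := Step pr (ξ ∘ ψ)) (p := Step (PRel pr ψ) ξ) (fun a b ⟨i, j, hij, ha, hb⟩ =>
        ⟨ψ i, ψ j, hsingle i j hij, ha, hb⟩) _ _ h

end JoyceIII
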